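/- Let n ≥ 1 and let μ_n be the product of n copies of the uniform distribution on [0, 2π). Then the expected GEPP max-norm growth factor of a Haar-butterfly matrix equals N^α for α = log₂(4/π): ∫ ∏_{j=1}^n (1 + min(tan²θ_j, 1/tan²θ_j)) dμ_n(θ) = (4/π)ⁿ = N^{log₂(4/π)}, where N = 2ⁿ. (Here ∏_{j=1}^n (1 + min(tan²θ_j, 1/tan²θ_j)) is the GEPP growth factor ρ of the Haar-butterfly matrix B(θ).) -/

import Mathlib

open MeasureTheory Real Set intervalIntegral

/-- The uniform probability distribution on `[0, 2π)`: `(2π)⁻¹·λ` restricted to `[0, 2π)`. -/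
noncomputable def unif : Measure ℝ :=
  (ENNReal.ofReal (2 * π))⁻¹ • volume.restrict (Set.Ico 0 (2 * π))

noncomputable def gf (x : ℝ) : ℝ := 1 + min (Real.tan x ^ 2) (Real.tan x ^ 2)⁻¹

lemma gf_periodic : Function.Periodic gf π := by
  intro x; simp [gf, Real.tan_periodic x]

lemma gf_eq_sec {x : ℝ} (hc : cos x ≠ 0) (h : sin x ^ 2 ≤ cos x ^ 2) :
    gf x = (cos x ^ 2)⁻¹ := by
  have ht : tan x ^ 2 = sin x ^ 2 / cos x ^ 2 := by
    rw [Real.tan_eq_sin_div_cos, div_pow]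
  have hmin : min (tan x ^ 2) (tan x ^ 2)⁻¹ = tan x ^ 2 := by
    apply min_eq_left
    rw [ht, inv_div]
    rcases eq_or_ne (sin x) 0 with hs | hs
    · simp [hs]
    · have hs2 : 0 < sin x ^ 2 := by positivity
      have hc2 : 0 < cos x ^ 2 := by positivity
      rw [div_le_div_iff₀ hc2 hs2]
      exact mul_le_mul h h (sq_nonneg _) (sq_nonneg _)
  rw [gf, hmin, ht]
  have hc2 : cos x ^ 2 ≠ 0 := pow_ne_zero _ hc
  field_simp
  linarith [Real.sin_sq_add_cos_sq x]

lemma gf_eq_csc {x : ℝ} (hs : sin x ≠ 0) (h : cos x ^ 2 ≤ sin x ^ 2) :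
    gf x = (sin x ^ 2)⁻¹ := by
  have ht : (tan x ^ 2)⁻¹ = cos x ^ 2 / sin x ^ 2 := by
    rw [Real.tan_eq_sin_div_cos, div_pow, inv_div]
  have hmin : min (tan x ^ 2) (tan x ^ 2)⁻¹ = (tan x ^ 2)⁻¹ := by
    apply min_eq_right
    rw [ht, Real.tan_eq_sin_div_cos, div_pow]
    rcases eq_or_ne (cos x) 0 with hc | hc
    · simp [hc]
    · have hs2 : 0 < sin x ^ 2 := by positivity
      have hc2 : 0 < cos x ^ 2 := by positivity
      rw [div_le_div_iff₀ hs2 hc2]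
      exact mul_le_mul h h (sq_nonneg _) (sq_nonneg _)
  rw [gf, hmin, ht]
  have hs2 : sin x ^ 2 ≠ 0 := pow_ne_zero _ hs
  field_simp
  linarith [Real.sin_sq_add_cos_sq x]

instance unif_prob : IsProbabilityMeasure unif := by
  constructor
  rw [unif, Measure.smul_apply, Measure.restrict_apply MeasurableSet.univ, Set.univ_inter,
    Real.volume_Ico, smul_eq_mul, sub_zero]
  rw [ENNReal.inv_mul_cancel]
  · simp only [ne_eq, ENNReal.ofReal_eq_zero, not_le]
    positivity
  · exact ENNReal.ofReal_ne_top

lemma sec_int {a b : ℝ} (hab : a ≤ b) (hc : ∀ x ∈ Icc a b, cos x ≠ 0) :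
    ∫ x in a..b, (cos x ^ 2)⁻¹ = tan b - tan a := by
  apply intervalIntegral.integral_eq_sub_of_hasDerivAt
  · intro x hx
    rw [uIcc_of_le hab] at hx
    simpa [one_div] using Real.hasDerivAt_tan (hc x hx)
  · apply ContinuousOn.intervalIntegrable
    rw [uIcc_of_le hab]
    exact (Real.continuous_cos.continuousOn.pow 2).inv₀
      fun x hx => pow_ne_zero _ (hc x hx)

lemma csc_int {a b : ℝ} (hab : a ≤ b) (hs : ∀ x ∈ Icc a b, sin x ≠ 0) :
    ∫ x in a..b, (sin x ^ 2)⁻¹ = -(cos b / sin b) + (cos a / sin a) := by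
  have : -(cos b / sin b) + cos a / sin a
      = (fun x => -(cos x / sin x)) b - (fun x => -(cos x / sin x)) a := by
    simp
  rw [this]
  apply intervalIntegral.integral_eq_sub_of_hasDerivAt
  · intro x hx
    rw [uIcc_of_le hab] at hx
    have h := ((Real.hasDerivAt_cos x).div (Real.hasDerivAt_sin x) (hs x hx)).neg
    convert h using 1
    · rfl
    have hsx := hs x hx
    field_simp
    nlinarith [Real.sin_sq_add_cos_sq x]
  · apply ContinuousOn.intervalIntegrable
    rw [uIcc_of_le hab]
    exact (Real.continuous_sin.continuousOn.pow 2).inv₀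
      fun x hx => pow_ne_zero _ (hs x hx)

lemma reg1 {x : ℝ} (hx : x ∈ Icc (0:ℝ) (π/4)) : cos x ≠ 0 ∧ sin x ^ 2 ≤ cos x ^ 2 := by
  obtain ⟨h1, h2⟩ := hx
  have hpi := Real.pi_pos
  constructor
  · exact (Real.cos_pos_of_mem_Ioo ⟨by linarith, by linarith⟩).ne'
  · have : 0 ≤ cos (2 * x) := Real.cos_nonneg_of_mem_Icc ⟨by linarith, by linarith⟩
    rw [Real.cos_two_mul'] at this
    linarith

lemma reg2 {x : ℝ} (hx : x ∈ Icc (π/4) (3*π/4)) : sin x ≠ 0 ∧ cos x ^ 2 ≤ sin x ^ 2 := by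
  obtain ⟨h1, h2⟩ := hx
  have hpi := Real.pi_pos
  constructor
  · exact (Real.sin_pos_of_pos_of_lt_pi (by linarith) (by linarith)).ne'
  · have : cos (2 * x) ≤ 0 :=
      Real.cos_nonpos_of_pi_div_two_le_of_le (by linarith) (by linarith)
    rw [Real.cos_two_mul'] at this
    linarith

lemma reg3 {x : ℝ} (hx : x ∈ Icc (3*π/4) π) : cos x ≠ 0 ∧ sin x ^ 2 ≤ cos x ^ 2 := by
  obtain ⟨h1, h2⟩ := hx
  have hpi := Real.pi_pos
  constructor
  · exact (Real.cos_neg_of_pi_div_two_lt_of_lt (by linarith) (by linarith)).ne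
  · have : 0 ≤ cos (2 * x - 2 * π) :=
      Real.cos_nonneg_of_mem_Icc ⟨by linarith, by linarith⟩
    rw [Real.cos_sub_two_pi, Real.cos_two_mul'] at this
    linarith

lemma gf_ii {a b : ℝ} (hab : a ≤ b) (g : ℝ → ℝ) (hg : ContinuousOn g (Icc a b))
    (heq : Set.EqOn gf g (Icc a b)) : IntervalIntegrable gf volume a b := by
  rw [intervalIntegrable_iff_integrableOn_Icc_of_le hab]
  exact (hg.integrableOn_Icc).congr_fun (fun x hx => (heq hx).symm) measurableSet_Icc

lemma P1 : ∫ x in (0:ℝ)..(π/4), gf x = 1 := by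
  have hab : (0:ℝ) ≤ π/4 := by positivity
  rw [intervalIntegral.integral_congr (g := fun x => (cos x ^ 2)⁻¹)
    (by rw [uIcc_of_le hab]; exact fun x hx => gf_eq_sec (reg1 hx).1 (reg1 hx).2)]
  rw [sec_int hab (fun x hx => (reg1 hx).1), Real.tan_pi_div_four, Real.tan_zero]
  norm_num

lemma P2 : ∫ x in (π/4:ℝ)..(3*π/4), gf x = 2 := by
  have hpi := Real.pi_pos
  have hab : (π/4:ℝ) ≤ 3*π/4 := by linarith
  rw [intervalIntegral.integral_congr (g := fun x => (sin x ^ 2)⁻¹)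
    (by rw [uIcc_of_le hab]; exact fun x hx => gf_eq_csc (reg2 hx).1 (reg2 hx).2)]
  rw [csc_int hab (fun x hx => (reg2 hx).1)]
  have h34 : (3*π/4 : ℝ) = π - π/4 := by ring
  rw [h34, Real.cos_pi_sub, Real.sin_pi_sub, Real.cos_pi_div_four, Real.sin_pi_div_four]
  have h2 : (0:ℝ) < Real.sqrt 2 := by positivity
  field_simp
  ring

lemma P3 : ∫ x in (3*π/4:ℝ)..π, gf x = 1 := by
  have hpi := Real.pi_pos
  have hab : (3*π/4:ℝ) ≤ π := by linarith
  rw [intervalIntegral.integral_congr (g := fun x => (cos x ^ 2)⁻¹)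
    (by rw [uIcc_of_le hab]; exact fun x hx => gf_eq_sec (reg3 hx).1 (reg3 hx).2)]
  rw [sec_int hab (fun x hx => (reg3 hx).1), Real.tan_pi]
  have h34 : (3*π/4 : ℝ) = π - π/4 := by ring
  rw [h34, Real.tan_eq_sin_div_cos, Real.cos_pi_sub, Real.sin_pi_sub,
    Real.cos_pi_div_four, Real.sin_pi_div_four]
  have : Real.sqrt 2 ≠ 0 := by positivity
  field_simp
  norm_num

lemma hii1 : IntervalIntegrable gf volume 0 (π/4) :=
  gf_ii (by positivity) _ ((Real.continuous_cos.continuousOn.pow 2).inv₀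
    fun x hx => pow_ne_zero _ (reg1 hx).1)
    (fun x hx => gf_eq_sec (reg1 hx).1 (reg1 hx).2)

lemma hii2 : IntervalIntegrable gf volume (π/4) (3*π/4) :=
  gf_ii (by have := Real.pi_pos; linarith) _
    ((Real.continuous_sin.continuousOn.pow 2).inv₀ fun x hx => pow_ne_zero _ (reg2 hx).1)
    (fun x hx => gf_eq_csc (reg2 hx).1 (reg2 hx).2)

lemma hii3 : IntervalIntegrable gf volume (3*π/4) π :=
  gf_ii (by have := Real.pi_pos; linarith) _
    ((Real.continuous_cos.continuousOn.pow 2).inv₀ fun x hx => pow_ne_zero _ (reg3 hx).1)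
    (fun x hx => gf_eq_sec (reg3 hx).1 (reg3 hx).2)

lemma hii0pi : IntervalIntegrable gf volume 0 π := (hii1.trans hii2).trans hii3

lemma I0pi : ∫ x in (0:ℝ)..π, gf x = 4 := by
  rw [← intervalIntegral.integral_add_adjacent_intervals (hii1.trans hii2) hii3,
    ← intervalIntegral.integral_add_adjacent_intervals hii1 hii2, P1, P2, P3]
  norm_num

lemma I02pi : ∫ x in (0:ℝ)..(2*π), gf x = 8 := by
  have hiipi2pi : IntervalIntegrable gf volume π (2*π) := by
    have h := hii0pi.comp_sub_right π
    have : (fun x => gf (x - π)) = gf := funext fun x => gf_periodic.sub_eq x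
    rw [this] at h
    simpa [two_mul] using h
  rw [two_mul] at hiipi2pi ⊢
  rw [← intervalIntegral.integral_add_adjacent_intervals hii0pi hiipi2pi]
  have := gf_periodic.intervalIntegral_add_eq π 0
  rw [zero_add] at this
  rw [this, I0pi]
  norm_num

lemma unif_int : ∫ x, gf x ∂unif = 4 / π := by
  have hpi := Real.pi_pos
  rw [unif, MeasureTheory.integral_smul_measure]
  rw [show ∫ x in Ico 0 (2*π), gf x = ∫ x in Ioc 0 (2*π), gf x from
    setIntegral_congr_set Ico_ae_eq_Ioc]
  rw [← intervalIntegral.integral_of_le (by linarith), I02pi]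
  rw [ENNReal.toReal_inv, ENNReal.toReal_ofReal (by linarith)]
  rw [smul_eq_mul]
  field_simp
  ring

/-- The product `μ_n` of `n` independent copies of the uniform distribution on `[0, 2π)`,
the distribution of the angles of a Haar-butterfly matrix `B(θ) = R(θ_1) ⊗ ⋯ ⊗ R(θ_n)`. -/
noncomputable def μpi (n : ℕ) : Measure (Fin n → ℝ) :=
  Measure.pi fun _ => unif

lemma integral_pi_pow (n : ℕ) (f : ℝ → ℝ) :
    (∫ θ : Fin n → ℝ, ∏ j, f (θ j) ∂(Measure.pi fun _ : Fin n => unif)) =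
      (∫ x, f x ∂unif) ^ n := by
  induction n with
  | zero =>
    have : IsProbabilityMeasure (Measure.pi fun _ : Fin 0 => unif) := inferInstance
    simp [Finset.univ_eq_empty, MeasureTheory.integral_const, measure_univ]
  | succ n ih =>
    calc
      (∫ θ : Fin (n+1) → ℝ, ∏ j, f (θ j) ∂(Measure.pi fun _ => unif))
          = ∫ x : ℝ × (Fin n → ℝ), f x.1 * ∏ i : Fin n, f (x.2 i)
            ∂(unif.prod (Measure.pi fun _ => unif)) := by
        rw [← ((measurePreserving_piFinSuccAbove (fun _ : Fin (n + 1) => unif)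
          0).symm).integral_comp']
        congr 1
        funext x
        rw [Fin.prod_univ_succ]
        simp [MeasurableEquiv.piFinSuccAbove_symm_apply, Fin.insertNthEquiv,
          Fin.insertNth_zero, Fin.zero_succAbove]
      _ = (∫ x, f x ∂unif) * ∫ θ : Fin n → ℝ, ∏ j, f (θ j) ∂(Measure.pi fun _ => unif) :=
        integral_prod_mul f fun θ : Fin n → ℝ => ∏ j, f (θ j)
      _ = (∫ x, f x ∂unif) ^ (n + 1) := by rw [ih, pow_succ, mul_comm]

/-- The expected GEPP max-norm growth factor of an `N×N` Haar-butterfly matrix (`N = 2ⁿ`)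
is `N^α` for `α = log₂(4/π)`:
`∫ ∏_j (1 + min(tan²θ_j, 1/tan²θ_j)) dμ_n(θ) = (4/π)ⁿ = N^{log₂(4/π)}`. -/
theorem expected_GEPP_maxNorm_growth (n : ℕ) (hn : 1 ≤ n) :
    (∫ θ : Fin n → ℝ,
        ∏ j, (1 + min (Real.tan (θ j) ^ 2) (Real.tan (θ j) ^ 2)⁻¹) ∂(μpi n)) =
      (4 / π) ^ n ∧
    ((4 / π : ℝ)) ^ n = ((2 : ℝ) ^ n) ^ Real.logb 2 (4 / π) := by
  have hpi := Real.pi_pos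
  constructor
  · show (∫ θ : Fin n → ℝ, ∏ j, gf (θ j) ∂(Measure.pi fun _ => unif)) = _
    rw [integral_pi_pow n gf, unif_int]
  · rw [← Real.rpow_natCast 2 n, ← Real.rpow_mul (by norm_num : (0:ℝ) ≤ 2), mul_comm,
      Real.rpow_mul (by norm_num : (0:ℝ) ≤ 2),
      Real.rpow_logb (by norm_num) (by norm_num) (by positivity), Real.rpow_natCast]
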